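/- Proposition 5, equation (prop5:2). Let M, N be positive integers and let μ be an integer with M+1 ≤ μ ≤ M+N. Let w₀, w₀' be free complex variables and let (w_j, w_j') for j = 1, …, μ−1 be pairs carrying the U_q(ŝl(M|N)) exchange factors (H^b for j ≤ M−1, H^0 for j = M, H^f for j ≥ M+1). Define D(u, u') = (u' − q w₁)(w₁' − q u) · Π_{j=1}^{M−1} (w_j' − q w_{j+1})(w_{j+1}' − q w_j) · Π_{j=M}^{μ−2} (q w_j' − w_{j+1})(q w_{j+1}' − w_j). Then D(w₀', w₀) ∼ ((q² w₀' − w₀)/(q² w₀ − w₀')) · D(w₀, w₀') with respect to the pairs (w₁, w₁'), …, (w_{μ−1}, w_{μ−1}'). -/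

import Mathlib

/-- Bosonic exchange factor `H^b(u,v) = -(q²v - u)/(q²u - v)`. -/
noncomputable def Hb (q u v : ℂ) : ℂ := -(q ^ 2 * v - u) / (q ^ 2 * u - v)

/-- Fermionic exchange factor `H^f(u,v) = -(q²u - v)/(q²v - u)`. -/
noncomputable def Hf (q u v : ℂ) : ℂ := -(q ^ 2 * u - v) / (q ^ 2 * v - u)

/-- Exchange factor assignment for `U_q(sl^(M|N))`: bosonic for `j < M`,
the constant `-1` for `j = M`, fermionic for `j > M`. -/
noncomputable def Hex (M : ℕ) (q : ℂ) (j : ℕ) : ℂ → ℂ → ℂ :=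
  if j < M then Hb q else if j = M then fun _ _ => -1 else Hf q

/-- Interchange `w_j` and `w_j'` for every `j ∈ σ`. -/
def swapOn (σ : Finset ℕ) (w w' : ℕ → ℂ) : ℕ → ℂ := fun j => if j ∈ σ then w' j else w j

/-- Weak equality `F ∼ G` with respect to the pairs `(w_j, w_j')`, `j ∈ J`,
carrying exchange factors `H j`. -/
def WeakEq (J : Finset ℕ) (H : ℕ → ℂ → ℂ → ℂ) (w w' : ℕ → ℂ)
    (F G : (ℕ → ℂ) → (ℕ → ℂ) → ℂ) : Prop :=
  ∑ σ ∈ J.powerset, (∏ j ∈ σ, H j (w' j) (w j)) * F (swapOn σ w w') (swapOn σ w' w)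
    = ∑ σ ∈ J.powerset, (∏ j ∈ σ, H j (w' j) (w j)) * G (swapOn σ w w') (swapOn σ w' w)

/-- `D(u, u') = (u' − q w₁)(w₁' − q u) · Π_{j=1}^{M−1} (w_j' − q w_{j+1})(w_{j+1}' − q w_j)
· Π_{j=M}^{μ−2} (q w_j' − w_{j+1})(q w_{j+1}' − w_j)`. -/
noncomputable def Dmix (q : ℂ) (M μ : ℕ) (x y : ℂ) (u u' : ℕ → ℂ) : ℂ :=
  (y - q * u 1) * (u' 1 - q * x) *
    (∏ j ∈ Finset.Ico 1 M, (u' j - q * u (j + 1)) * (u' (j + 1) - q * u j)) *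
    ∏ j ∈ Finset.Ico M (μ - 1), (q * u' j - u (j + 1)) * (q * u' (j + 1) - u j)

namespace Prop5Aux

open Finset

/-- Bosonic link factor. -/
noncomputable def bosL (q : ℂ) (u u' : ℕ → ℂ) (j : ℕ) : ℂ :=
  (u' j - q * u (j + 1)) * (u' (j + 1) - q * u j)

/-- Fermionic link factor. -/
noncomputable def ferL (q : ℂ) (u u' : ℕ → ℂ) (j : ℕ) : ℂ :=
  (q * u' j - u (j + 1)) * (q * u' (j + 1) - u j)

lemma swapOn_notMem {σ : Finset ℕ} {j : ℕ} (h : j ∉ σ) (w w' : ℕ → ℂ) :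
    swapOn σ w w' j = w j := if_neg h

lemma swapOn_mem {σ : Finset ℕ} {j : ℕ} (h : j ∈ σ) (w w' : ℕ → ℂ) :
    swapOn σ w w' j = w' j := if_pos h

lemma swapOn_insert_ne {k j : ℕ} (h : j ≠ k) (σ : Finset ℕ) (w w' : ℕ → ℂ) :
    swapOn (insert k σ) w w' j = swapOn σ w w' j := by
  simp [swapOn, Finset.mem_insert, h]

lemma swapOn_insert_self {k : ℕ} (σ : Finset ℕ) (w w' : ℕ → ℂ) :
    swapOn (insert k σ) w w' k = w' k := by
  simp [swapOn]

lemma swapOn_add (σ : Finset ℕ) (w w' : ℕ → ℂ) (j : ℕ) :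
    swapOn σ w w' j + swapOn σ w' w j = w j + w' j := by
  unfold swapOn; split <;> ring

lemma swapOn_mul (σ : Finset ℕ) (w w' : ℕ → ℂ) (j : ℕ) :
    swapOn σ w w' j * swapOn σ w' w j = w j * w' j := by
  unfold swapOn; split <;> ring

lemma Hex_lt {M j : ℕ} (h : j < M) (q : ℂ) : Hex M q j = Hb q := if_pos h

lemma Hex_self (M : ℕ) (q : ℂ) : Hex M q M = fun _ _ => -1 := by
  unfold Hex; rw [if_neg (lt_irrefl M), if_pos rfl]

lemma Hex_gt {M j : ℕ} (h : M < j) (q : ℂ) : Hex M q j = Hf q := by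
  unfold Hex; rw [if_neg (by omega), if_neg (by omega)]

lemma Ico_succ_insert {a b : ℕ} (h : a ≤ b) :
    Finset.Ico a (b + 1) = insert b (Finset.Ico a b) := by
  ext x; simp [Finset.mem_Ico, Finset.mem_insert]; omega

/-- The bosonic chain with boundary weight `u'ₘ - q² uₘ` is weakly zero. -/
lemma bosZero (q : ℂ) (w w' : ℕ → ℂ) :
    ∀ m : ℕ, 1 ≤ m →
    (∀ j ∈ Finset.Ico 1 (m + 1), q ^ 2 * w' j ≠ w j) →
    ∑ σ ∈ (Finset.Ico 1 (m + 1)).powerset,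
      (∏ j ∈ σ, Hb q (w' j) (w j)) *
        ((∏ j ∈ Finset.Ico 1 m, bosL q (swapOn σ w w') (swapOn σ w' w) j) *
          (swapOn σ w' w m - q ^ 2 * swapOn σ w w' m)) = 0 := by
  intro m hm
  induction m, hm using Nat.le_induction with
  | base =>
    intro hden
    have h1 : q ^ 2 * w' 1 ≠ w 1 := hden 1 (by simp)
    have hIco : Finset.Ico 1 2 = {1} := rfl
    rw [hIco, show ({1} : Finset ℕ) = insert 1 ∅ from rfl,
      Finset.sum_powerset_insert (Finset.notMem_empty 1), Finset.powerset_empty,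
      Finset.sum_singleton, Finset.sum_singleton]
    have hd : q ^ 2 * w' 1 - w 1 ≠ 0 := sub_ne_zero.mpr h1
    have hd' : w' 1 * q ^ 2 - w 1 ≠ 0 := by rw [mul_comm]; exact hd
    simp only [Finset.prod_empty, Finset.prod_insert (Finset.notMem_empty 1),
      Finset.prod_singleton, Finset.Ico_self,
      swapOn_notMem (by simp : (1:ℕ) ∉ (∅ : Finset ℕ)),
      swapOn_mem (by simp : (1:ℕ) ∈ insert 1 (∅ : Finset ℕ)), Hb]
    field_simp
    ring
  | succ m hm ih =>
    intro hden
    have hden' : ∀ j ∈ Finset.Ico 1 (m + 1), q ^ 2 * w' j ≠ w j := by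
      intro j hj
      exact hden j (by simp only [Finset.mem_Ico] at hj ⊢; omega)
    have hnm : (m + 1) ∉ Finset.Ico 1 (m + 1) := by simp
    rw [Ico_succ_insert (by omega), Finset.sum_powerset_insert hnm,
      ← Finset.sum_add_distrib]
    have key : ∀ σ ∈ (Finset.Ico 1 (m + 1)).powerset,
        (∏ j ∈ σ, Hb q (w' j) (w j)) *
          ((∏ j ∈ Finset.Ico 1 (m + 1), bosL q (swapOn σ w w') (swapOn σ w' w) j) *
            (swapOn σ w' w (m + 1) - q ^ 2 * swapOn σ w w' (m + 1)))
        + (∏ j ∈ insert (m + 1) σ, Hb q (w' j) (w j)) *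
          ((∏ j ∈ Finset.Ico 1 (m + 1),
              bosL q (swapOn (insert (m + 1) σ) w w') (swapOn (insert (m + 1) σ) w' w) j) *
            (swapOn (insert (m + 1) σ) w' w (m + 1)
              - q ^ 2 * swapOn (insert (m + 1) σ) w w' (m + 1)))
        = ((w' (m + 1) - q ^ 2 * w (m + 1)) * (w' (m + 1) - w (m + 1))) *
          ((∏ j ∈ σ, Hb q (w' j) (w j)) *
            ((∏ j ∈ Finset.Ico 1 m, bosL q (swapOn σ w w') (swapOn σ w' w) j) *
              (swapOn σ w' w m - q ^ 2 * swapOn σ w w' m))) := by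
      intro σ hσ
      have hσ' : σ ⊆ Finset.Ico 1 (m + 1) := Finset.mem_powerset.mp hσ
      have hns : (m + 1) ∉ σ := fun h => hnm (hσ' h)
      rw [Finset.prod_insert hns]
      rw [Finset.prod_Ico_succ_top (by omega : 1 ≤ m),
        Finset.prod_Ico_succ_top (by omega : 1 ≤ m)]
      have hlow : ∀ j ∈ Finset.Ico 1 m,
          bosL q (swapOn (insert (m + 1) σ) w w') (swapOn (insert (m + 1) σ) w' w) j
            = bosL q (swapOn σ w w') (swapOn σ w' w) j := by
        intro j hj
        simp only [Finset.mem_Ico] at hj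
        unfold bosL
        rw [swapOn_insert_ne (by omega), swapOn_insert_ne (by omega),
          swapOn_insert_ne (by omega), swapOn_insert_ne (by omega)]
      rw [Finset.prod_congr rfl hlow]
      unfold bosL
      rw [swapOn_insert_ne (by omega : m ≠ m + 1), swapOn_insert_ne (by omega : m ≠ m + 1),
        swapOn_insert_self, swapOn_insert_self,
        swapOn_notMem hns, swapOn_notMem hns]
      have hd : q ^ 2 * w' (m + 1) - w (m + 1) ≠ 0 :=
        sub_ne_zero.mpr (hden (m + 1) (by simp only [Finset.mem_Ico]; omega))
      set a := swapOn σ w w' m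
      set a' := swapOn σ w' w m
      set c := w (m + 1)
      set c' := w' (m + 1)
      set P := ∏ j ∈ σ, Hb q (w' j) (w j)
      set L := ∏ j ∈ Finset.Ico 1 m, bosL q (swapOn σ w w') (swapOn σ w' w) j
      show P * (L * ((a' - q * c) * (c' - q * a)) * (c' - q ^ 2 * c))
          + Hb q c' c * P * (L * ((a' - q * c') * (c - q * a)) * (c - q ^ 2 * c'))
          = (c' - q ^ 2 * c) * (c' - c) * (P * (L * (a' - q ^ 2 * a)))
      unfold Hb
      field_simp
      ring
    rw [Finset.sum_congr rfl key, ← Finset.mul_sum, ih hden', mul_zero]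

/-- The mixed chain, ending with fermionic pairs, with an arbitrary symmetric
boundary weight at the top pair, is weakly zero. -/
lemma fermZero (q : ℂ) (M : ℕ) (hM : 1 ≤ M) (w w' : ℕ → ℂ) :
    ∀ n : ℕ, M ≤ n →
    (∀ j ∈ Finset.Ico 1 (n + 1),
      (j < M → q ^ 2 * w' j ≠ w j) ∧ (M < j → q ^ 2 * w j ≠ w' j)) →
    ∀ W : ℂ → ℂ → ℂ, (∀ a b, W a b = W b a) →
    ∑ σ ∈ (Finset.Ico 1 (n + 1)).powerset,
      (∏ j ∈ σ, Hex M q j (w' j) (w j)) *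
        (((∏ j ∈ Finset.Ico 1 M, bosL q (swapOn σ w w') (swapOn σ w' w) j) *
          (∏ j ∈ Finset.Ico M n, ferL q (swapOn σ w w') (swapOn σ w' w) j)) *
          W (swapOn σ w w' n) (swapOn σ w' w n)) = 0 := by
  intro n hn
  induction n, hn using Nat.le_induction with
  | base =>
    intro hden W hW
    rcases Nat.lt_or_ge 1 M with hM2 | hM1
    · -- M ≥ 2 : peel index M, reduce to the bosonic lemma
      have hnm : M ∉ Finset.Ico 1 M := by simp
      rw [Ico_succ_insert (by omega), Finset.sum_powerset_insert hnm,
        ← Finset.sum_add_distrib]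
      -- rewrite Ico 1 M as Ico 1 ((M-1)+1)
      obtain ⟨m, rfl⟩ : ∃ m, M = m + 1 := ⟨M - 1, by omega⟩
      have hm1 : 1 ≤ m := by omega
      have key : ∀ σ ∈ (Finset.Ico 1 (m + 1)).powerset,
          (∏ j ∈ σ, Hex (m + 1) q j (w' j) (w j)) *
            (((∏ j ∈ Finset.Ico 1 (m + 1), bosL q (swapOn σ w w') (swapOn σ w' w) j) *
              (∏ j ∈ Finset.Ico (m + 1) (m + 1),
                ferL q (swapOn σ w w') (swapOn σ w' w) j)) *
              W (swapOn σ w w' (m + 1)) (swapOn σ w' w (m + 1)))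
          + (∏ j ∈ insert (m + 1) σ, Hex (m + 1) q j (w' j) (w j)) *
            (((∏ j ∈ Finset.Ico 1 (m + 1),
                bosL q (swapOn (insert (m + 1) σ) w w') (swapOn (insert (m + 1) σ) w' w) j) *
              (∏ j ∈ Finset.Ico (m + 1) (m + 1),
                ferL q (swapOn (insert (m + 1) σ) w w')
                  (swapOn (insert (m + 1) σ) w' w) j)) *
              W (swapOn (insert (m + 1) σ) w w' (m + 1))
                (swapOn (insert (m + 1) σ) w' w (m + 1)))
          = (W (w (m + 1)) (w' (m + 1)) * (w' (m + 1) - w (m + 1))) *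
            ((∏ j ∈ σ, Hb q (w' j) (w j)) *
              ((∏ j ∈ Finset.Ico 1 m, bosL q (swapOn σ w w') (swapOn σ w' w) j) *
                (swapOn σ w' w m - q ^ 2 * swapOn σ w w' m))) := by
        intro σ hσ
        have hσ' : σ ⊆ Finset.Ico 1 (m + 1) := Finset.mem_powerset.mp hσ
        have hns : (m + 1) ∉ σ := fun h => hnm (hσ' h)
        have hPrw : (∏ j ∈ σ, Hex (m + 1) q j (w' j) (w j))
            = ∏ j ∈ σ, Hb q (w' j) (w j) := by
          refine Finset.prod_congr rfl fun j hj => ?_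
          have : j < m + 1 := (Finset.mem_Ico.mp (hσ' hj)).2
          rw [Hex_lt this]
        rw [Finset.prod_insert hns, hPrw, Hex_self]
        rw [Finset.Ico_self, Finset.prod_empty, Finset.prod_empty]
        rw [Finset.prod_Ico_succ_top (by omega : 1 ≤ m),
          Finset.prod_Ico_succ_top (by omega : 1 ≤ m)]
        have hlow : ∀ j ∈ Finset.Ico 1 m,
            bosL q (swapOn (insert (m + 1) σ) w w') (swapOn (insert (m + 1) σ) w' w) j
              = bosL q (swapOn σ w w') (swapOn σ w' w) j := by
          intro j hj
          simp only [Finset.mem_Ico] at hj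
          unfold bosL
          rw [swapOn_insert_ne (by omega), swapOn_insert_ne (by omega),
            swapOn_insert_ne (by omega), swapOn_insert_ne (by omega)]
        rw [Finset.prod_congr rfl hlow]
        unfold bosL
        rw [swapOn_insert_ne (by omega : m ≠ m + 1), swapOn_insert_ne (by omega : m ≠ m + 1),
          swapOn_insert_self, swapOn_insert_self,
          swapOn_notMem hns, swapOn_notMem hns]
        rw [hW (w' (m + 1)) (w (m + 1))]
        set a := swapOn σ w w' m
        set a' := swapOn σ w' w m
        set c := w (m + 1)
        set c' := w' (m + 1)
        set P := ∏ j ∈ σ, Hb q (w' j) (w j)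
        set L := ∏ j ∈ Finset.Ico 1 m, bosL q (swapOn σ w w') (swapOn σ w' w) j
        show P * ((L * ((a' - q * c) * (c' - q * a)) * 1) * W c c')
            + (-1 : ℂ) * P * ((L * ((a' - q * c') * (c - q * a)) * 1) * W c c')
            = (W c c' * (c' - c)) * (P * (L * (a' - q ^ 2 * a)))
        ring
      rw [Finset.sum_congr rfl key, ← Finset.mul_sum]
      rw [bosZero q w w' m hm1 (fun j hj => by
        have hj' : j ∈ Finset.Ico 1 (m + 1 + 1) := by
          simp only [Finset.mem_Ico] at hj ⊢; omega
        exact (hden j hj').1 (by simp only [Finset.mem_Ico] at hj; omega)), mul_zero]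
    · -- M = 1 : direct computation
      have hM1' : M = 1 := by omega
      subst hM1'
      have hIco : Finset.Ico 1 2 = {1} := rfl
      rw [hIco, show ({1} : Finset ℕ) = insert 1 ∅ from rfl,
        Finset.sum_powerset_insert (Finset.notMem_empty 1), Finset.powerset_empty,
        Finset.sum_singleton, Finset.sum_singleton]
      simp only [Finset.prod_empty, Finset.prod_insert (Finset.notMem_empty 1),
        Finset.prod_singleton, Finset.Ico_self,
        swapOn_notMem (by simp : (1:ℕ) ∉ (∅ : Finset ℕ)),
        swapOn_mem (by simp : (1:ℕ) ∈ insert 1 (∅ : Finset ℕ)), Hex_self]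
      rw [hW (w' 1) (w 1)]
      ring
  | succ n hn ih =>
    intro hden W hW
    have hden' : ∀ j ∈ Finset.Ico 1 (n + 1),
        (j < M → q ^ 2 * w' j ≠ w j) ∧ (M < j → q ^ 2 * w j ≠ w' j) := by
      intro j hj
      exact hden j (by simp only [Finset.mem_Ico] at hj ⊢; omega)
    have hnm : (n + 1) ∉ Finset.Ico 1 (n + 1) := by simp
    rw [Ico_succ_insert (by omega), Finset.sum_powerset_insert hnm,
      ← Finset.sum_add_distrib]
    set c := w (n + 1) with hc
    set c' := w' (n + 1) with hc'
    have hd : q ^ 2 * c - c' ≠ 0 :=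
      sub_ne_zero.mpr ((hden (n + 1) (by simp only [Finset.mem_Ico]; omega)).2 (by omega))
    set W' : ℂ → ℂ → ℂ := fun x y => W c c' *
      (((q * y - c) * (q * c' - x) * (q ^ 2 * c - c')
          - (q ^ 2 * c' - c) * ((q * y - c') * (q * c - x))) / (q ^ 2 * c - c')) with hW'def
    have hW' : ∀ x y, W' x y = W' y x := by
      intro x y
      simp only [hW'def]
      rw [show (q * y - c) * (q * c' - x) * (q ^ 2 * c - c')
            - (q ^ 2 * c' - c) * ((q * y - c') * (q * c - x))
          = (q * x - c) * (q * c' - y) * (q ^ 2 * c - c')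
            - (q ^ 2 * c' - c) * ((q * x - c') * (q * c - y)) from by ring]
    have key : ∀ σ ∈ (Finset.Ico 1 (n + 1)).powerset,
        (∏ j ∈ σ, Hex M q j (w' j) (w j)) *
          (((∏ j ∈ Finset.Ico 1 M, bosL q (swapOn σ w w') (swapOn σ w' w) j) *
            (∏ j ∈ Finset.Ico M (n + 1), ferL q (swapOn σ w w') (swapOn σ w' w) j)) *
            W (swapOn σ w w' (n + 1)) (swapOn σ w' w (n + 1)))
        + (∏ j ∈ insert (n + 1) σ, Hex M q j (w' j) (w j)) *
          (((∏ j ∈ Finset.Ico 1 M,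
              bosL q (swapOn (insert (n + 1) σ) w w') (swapOn (insert (n + 1) σ) w' w) j) *
            (∏ j ∈ Finset.Ico M (n + 1),
              ferL q (swapOn (insert (n + 1) σ) w w') (swapOn (insert (n + 1) σ) w' w) j)) *
            W (swapOn (insert (n + 1) σ) w w' (n + 1))
              (swapOn (insert (n + 1) σ) w' w (n + 1)))
        = (∏ j ∈ σ, Hex M q j (w' j) (w j)) *
            (((∏ j ∈ Finset.Ico 1 M, bosL q (swapOn σ w w') (swapOn σ w' w) j) *
              (∏ j ∈ Finset.Ico M n, ferL q (swapOn σ w w') (swapOn σ w' w) j)) *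
              W' (swapOn σ w w' n) (swapOn σ w' w n)) := by
      intro σ hσ
      have hσ' : σ ⊆ Finset.Ico 1 (n + 1) := Finset.mem_powerset.mp hσ
      have hns : (n + 1) ∉ σ := fun h => hnm (hσ' h)
      rw [Finset.prod_insert hns, Hex_gt (by omega : M < n + 1)]
      rw [Finset.prod_Ico_succ_top (by omega : M ≤ n),
        Finset.prod_Ico_succ_top (by omega : M ≤ n)]
      have hlowB : ∀ j ∈ Finset.Ico 1 M,
          bosL q (swapOn (insert (n + 1) σ) w w') (swapOn (insert (n + 1) σ) w' w) j
            = bosL q (swapOn σ w w') (swapOn σ w' w) j := by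
        intro j hj
        simp only [Finset.mem_Ico] at hj
        unfold bosL
        rw [swapOn_insert_ne (by omega), swapOn_insert_ne (by omega),
          swapOn_insert_ne (by omega), swapOn_insert_ne (by omega)]
      have hlowF : ∀ j ∈ Finset.Ico M n,
          ferL q (swapOn (insert (n + 1) σ) w w') (swapOn (insert (n + 1) σ) w' w) j
            = ferL q (swapOn σ w w') (swapOn σ w' w) j := by
        intro j hj
        simp only [Finset.mem_Ico] at hj
        unfold ferL
        rw [swapOn_insert_ne (by omega), swapOn_insert_ne (by omega),
          swapOn_insert_ne (by omega), swapOn_insert_ne (by omega)]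
      rw [Finset.prod_congr rfl hlowB, Finset.prod_congr rfl hlowF]
      unfold ferL
      rw [swapOn_insert_ne (by omega : n ≠ n + 1), swapOn_insert_ne (by omega : n ≠ n + 1),
        swapOn_insert_self, swapOn_insert_self,
        swapOn_notMem hns, swapOn_notMem hns]
      rw [hW (w' (n + 1)) (w (n + 1))]
      rw [← hc, ← hc']
      set a := swapOn σ w w' n
      set a' := swapOn σ w' w n
      set P := ∏ j ∈ σ, Hex M q j (w' j) (w j)
      set B := ∏ j ∈ Finset.Ico 1 M, bosL q (swapOn σ w w') (swapOn σ w' w) j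
      set F := ∏ j ∈ Finset.Ico M n, ferL q (swapOn σ w w') (swapOn σ w' w) j
      show P * ((B * (F * ((q * a' - c) * (q * c' - a)))) * W c c')
          + Hf q c' c * P * ((B * (F * ((q * a' - c') * (q * c - a)))) * W c c')
          = P * ((B * F) * W' a a')
      simp only [hW'def, Hf]
      field_simp
      ring
    rw [Finset.sum_congr rfl key]
    exact ih hden' W' hW'

end Prop5Aux

/-- Proposition 5, eq. (prop5:2): for `M+1 ≤ μ ≤ M+N`,
`D(w₀', w₀) ∼ ((q² w₀' − w₀)/(q² w₀ − w₀')) D(w₀, w₀') with respect to the pairs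
`(w₁, w₁'), …, (w_{μ−1}, w_{μ−1}')` carrying the `U_q(sl^(M|N))` exchange factors. -/
theorem proposition5_second (M N : ℕ) (hM : 1 ≤ M) (hN : 1 ≤ N)
    (μ : ℕ) (hμ1 : M + 1 ≤ μ) (hμ2 : μ ≤ M + N)
    (q : ℂ) (hq : q ≠ 0) (hq2 : q ^ 2 ≠ 1) (w w' : ℕ → ℂ)
    (h0 : q ^ 2 * w 0 ≠ w' 0)
    (hden : ∀ j ∈ Finset.Ico 1 μ,
      (j < M → q ^ 2 * w' j ≠ w j) ∧ (M < j → q ^ 2 * w j ≠ w' j)) :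
    WeakEq (Finset.Ico 1 μ) (Hex M q) w w'
      (fun u u' => Dmix q M μ (u' 0) (u 0) u u')
      (fun u u' =>
        ((q ^ 2 * u' 0 - u 0) / (q ^ 2 * u 0 - u' 0)) * Dmix q M μ (u 0) (u' 0) u u') := by
  classical
  open Prop5Aux in
  obtain ⟨n, rfl⟩ : ∃ n, μ = n + 1 := ⟨μ - 1, by omega⟩
  have hMn : M ≤ n := by omega
  unfold WeakEq
  set pw := (Finset.Ico 1 (n + 1)).powerset with hpw
  set P : Finset ℕ → ℂ := fun σ => ∏ j ∈ σ, Hex M q j (w' j) (w j) with hP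
  set Rst : Finset ℕ → ℂ := fun σ =>
    (∏ j ∈ Finset.Ico 1 M, bosL q (swapOn σ w w') (swapOn σ w' w) j) *
      (∏ j ∈ Finset.Ico M n, ferL q (swapOn σ w w') (swapOn σ w' w) j) with hRst
  have h0mem : ∀ σ ∈ pw, (0 : ℕ) ∉ σ := by
    intro σ hσ h
    have := Finset.mem_powerset.mp hσ h
    simp [Finset.mem_Ico] at this
  -- key vanishing sums
  have hS0 : ∑ σ ∈ pw, P σ * Rst σ = 0 := by
    have := fermZero q M hM w w' n hMn hden (fun _ _ => 1) (fun _ _ => rfl)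
    rw [← this]
    exact Finset.sum_congr rfl fun σ _ => by rw [mul_one]
  have hS11 : ∑ σ ∈ pw, P σ * Rst σ * (swapOn σ w w' 1 * swapOn σ w' w 1) = 0 := by
    have : ∀ σ ∈ pw, P σ * Rst σ * (swapOn σ w w' 1 * swapOn σ w' w 1)
        = P σ * Rst σ * (w 1 * w' 1) := fun σ _ => by rw [swapOn_mul]
    rw [Finset.sum_congr rfl this, ← Finset.sum_mul, hS0, zero_mul]
  have hS1sum : ∑ σ ∈ pw, P σ * Rst σ * swapOn σ w w' 1
      + ∑ σ ∈ pw, P σ * Rst σ * swapOn σ w' w 1 = 0 := by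
    rw [← Finset.sum_add_distrib]
    have : ∀ σ ∈ pw, P σ * Rst σ * swapOn σ w w' 1 + P σ * Rst σ * swapOn σ w' w 1
        = P σ * Rst σ * (w 1 + w' 1) := fun σ _ => by
      rw [← mul_add, swapOn_add]
    rw [Finset.sum_congr rfl this, ← Finset.sum_mul, hS0, zero_mul]
  set S1 := ∑ σ ∈ pw, P σ * Rst σ * swapOn σ w w' 1 with hS1def
  set S1' := ∑ σ ∈ pw, P σ * Rst σ * swapOn σ w' w 1 with hS1'def
  have hS1 : S1 = -S1' := by linear_combination hS1sum
  -- expand the left-hand side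
  have expandL : ∀ σ ∈ pw,
      P σ * Dmix q M (n + 1) (swapOn σ w' w 0) (swapOn σ w w' 0)
        (swapOn σ w w') (swapOn σ w' w)
      = w 0 * (P σ * Rst σ * swapOn σ w' w 1)
        + q ^ 2 * w' 0 * (P σ * Rst σ * swapOn σ w w' 1)
        - q * w' 0 * w 0 * (P σ * Rst σ)
        - q * (P σ * Rst σ * (swapOn σ w w' 1 * swapOn σ w' w 1)) := by
    intro σ hσ
    rw [swapOn_notMem (h0mem σ hσ), swapOn_notMem (h0mem σ hσ)]
    simp only [Dmix, hRst, bosL, ferL, Nat.add_sub_cancel]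
    ring
  have expandR : ∀ σ ∈ pw,
      P σ * ((q ^ 2 * swapOn σ w' w 0 - swapOn σ w w' 0) /
          (q ^ 2 * swapOn σ w w' 0 - swapOn σ w' w 0) *
        Dmix q M (n + 1) (swapOn σ w w' 0) (swapOn σ w' w 0)
          (swapOn σ w w') (swapOn σ w' w))
      = ((q ^ 2 * w' 0 - w 0) / (q ^ 2 * w 0 - w' 0)) * w' 0 *
            (P σ * Rst σ * swapOn σ w' w 1)
        + ((q ^ 2 * w' 0 - w 0) / (q ^ 2 * w 0 - w' 0)) * q ^ 2 * w 0 *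
            (P σ * Rst σ * swapOn σ w w' 1)
        - ((q ^ 2 * w' 0 - w 0) / (q ^ 2 * w 0 - w' 0)) * q * w 0 * w' 0 * (P σ * Rst σ)
        - ((q ^ 2 * w' 0 - w 0) / (q ^ 2 * w 0 - w' 0)) * q *
            (P σ * Rst σ * (swapOn σ w w' 1 * swapOn σ w' w 1)) := by
    intro σ hσ
    rw [swapOn_notMem (h0mem σ hσ), swapOn_notMem (h0mem σ hσ)]
    simp only [Dmix, hRst, bosL, ferL, Nat.add_sub_cancel]
    ring
  rw [Finset.sum_congr rfl expandL, Finset.sum_congr rfl expandR]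
  simp only [Finset.sum_sub_distrib, Finset.sum_add_distrib, ← Finset.mul_sum]
  rw [← hS1def, ← hS1'def, hS0, hS11, hS1]
  have hd : q ^ 2 * w 0 - w' 0 ≠ 0 := sub_ne_zero.mpr h0
  have hd' : w 0 * q ^ 2 - w' 0 ≠ 0 := by rw [mul_comm]; exact hd
  field_simp
  ring
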